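/- The family consisting of the identity 1, the elements v^p for p ≥ 1, the elements u^p for p ≥ 1, and the elements e_{i,j} := v^i (1 − v u) u^j for all i, j ∈ ℕ, is a ℂ-vector space basis of the algebraic Toeplitz algebra T_alg. -/
import Mathlib


/-- The defining relation of the algebraic Toeplitz algebra: `U * V = 1`,
where `U = ι false` and `V = ι true` are the two generators of the free algebra. -/
inductive ToeplitzRel : FreeAlgebra ℂ Bool → FreeAlgebra ℂ Bool → Prop
  | rel : ToeplitzRel (FreeAlgebra.ι ℂ false * FreeAlgebra.ι ℂ true) 1

/-- The algebraic Toeplitz algebra: the quotient of the free `ℂ`-algebra on two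
generators `U, V` by the two-sided ideal generated by `U * V - 1`. -/
abbrev Talg : Type := RingQuot ToeplitzRel

/-- The image `u` of the generator `U` in the algebraic Toeplitz algebra. -/
noncomputable def Tu : Talg := RingQuot.mkAlgHom ℂ ToeplitzRel (FreeAlgebra.ι ℂ false)

/-- The image `v` of the generator `V` in the algebraic Toeplitz algebra. -/
noncomputable def Tv : Talg := RingQuot.mkAlgHom ℂ ToeplitzRel (FreeAlgebra.ι ℂ true)

/-- The matrix units `e_{i,j} = v^i (1 - v u) u^j` of the algebraic Toeplitz algebra. -/
noncomputable def Te (i j : ℕ) : Talg := Tv ^ i * (1 - Tv * Tu) * Tu ^ j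

/-- The family consisting of `1`, the `v^p` for `p ≥ 1`, the `u^p` for `p ≥ 1`,
and the matrix units `e_{i,j}` for `i, j ∈ ℕ`. -/
noncomputable def basisFam : Unit ⊕ ℕ+ ⊕ ℕ+ ⊕ ℕ × ℕ → Talg
  | Sum.inl _ => 1
  | Sum.inr (Sum.inl p) => Tv ^ (p : ℕ)
  | Sum.inr (Sum.inr (Sum.inl p)) => Tu ^ (p : ℕ)
  | Sum.inr (Sum.inr (Sum.inr ij)) => Te ij.1 ij.2

noncomputable section ToeplitzAux

abbrev MM : Type := ℕ →₀ ℂ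

def Ufun : ℕ → ℂ →ₗ[ℂ] MM
  | 0 => 0
  | m + 1 => Finsupp.lsingle m

def Uop : MM →ₗ[ℂ] MM := Finsupp.lsum ℂ Ufun
def Vop : MM →ₗ[ℂ] MM := Finsupp.lsum ℂ (fun n => Finsupp.lsingle (n + 1))

lemma Uop_single (n : ℕ) (c : ℂ) : Uop (Finsupp.single n c) = Ufun n c := by
  simp [Uop]

lemma Vop_single (n : ℕ) (c : ℂ) : Vop (Finsupp.single n c) = Finsupp.single (n + 1) c := by
  simp [Vop]

lemma UV : Uop * Vop = 1 := by
  apply Finsupp.lhom_ext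
  intro n c
  simp [Module.End.mul_apply, Vop_single, Uop_single, Ufun]

def ψ : Talg →ₐ[ℂ] Module.End ℂ MM :=
  RingQuot.liftAlgHom ℂ ⟨FreeAlgebra.lift ℂ (fun b => if b then Vop else Uop), by
    rintro x y ⟨⟩
    simp [UV]⟩

lemma ψ_u : ψ Tu = Uop := by
  rw [Tu, ψ, RingQuot.liftAlgHom_mkAlgHom_apply]
  simp

lemma ψ_v : ψ Tv = Vop := by
  rw [Tv, ψ, RingQuot.liftAlgHom_mkAlgHom_apply]
  simp

lemma Vpow (p n : ℕ) : (Vop ^ p) (Finsupp.single n 1) = Finsupp.single (n + p) 1 := by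
  induction p with
  | zero => simp
  | succ m ih =>
    rw [pow_succ', Module.End.mul_apply, ih, Vop_single, add_assoc]

lemma Upow_le (p n : ℕ) : (Uop ^ p) (Finsupp.single (n + p) 1) = Finsupp.single n 1 := by
  induction p with
  | zero => simp
  | succ m ih =>
    rw [pow_succ, Module.End.mul_apply, show n + (m + 1) = (n + m) + 1 from rfl, Uop_single,
      show Ufun ((n + m) + 1) = Finsupp.lsingle (n + m) from rfl, Finsupp.lsingle_apply, ih]

lemma Upow_lt (p n : ℕ) (h : n < p) : (Uop ^ p) (Finsupp.single n 1) = 0 := by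
  induction p generalizing n with
  | zero => omega
  | succ m ih =>
    rw [pow_succ, Module.End.mul_apply, Uop_single]
    cases n with
    | zero => simp [Ufun]
    | succ k =>
      rw [show Ufun (k + 1) = Finsupp.lsingle k from rfl, Finsupp.lsingle_apply]
      exact ih k (by omega)

lemma Pop_single (n : ℕ) :
    ((1 : Module.End ℂ MM) - Vop * Uop) (Finsupp.single n 1) =
      if n = 0 then Finsupp.single 0 1 else 0 := by
  cases n with
  | zero => simp [LinearMap.sub_apply, Module.End.mul_apply, Uop_single, Ufun]
  | succ k =>
    simp [LinearMap.sub_apply, Module.End.mul_apply, Uop_single, Ufun, Vop_single]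

lemma Eop (i j n : ℕ) :
    (Vop ^ i * ((1 : Module.End ℂ MM) - Vop * Uop) * Uop ^ j) (Finsupp.single n 1) =
      if n = j then Finsupp.single i 1 else 0 := by
  rw [Module.End.mul_apply, Module.End.mul_apply]
  rcases Nat.lt_trichotomy n j with h | h | h
  · rw [Upow_lt j n h, map_zero, map_zero, if_neg (by omega)]
  · subst h
    rw [show (Uop ^ n) (Finsupp.single n 1) = Finsupp.single 0 1 by
        simpa using Upow_le n 0, Pop_single, if_pos rfl, if_pos rfl]
    simpa using Vpow i 0
  · obtain ⟨k, hk, rfl⟩ : ∃ k, k ≠ 0 ∧ n = k + j := ⟨n - j, by omega, by omega⟩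
    rw [Upow_le j k, Pop_single, if_neg hk, map_zero, if_neg (by omega)]

def coordLM : Module.End ℂ MM →ₗ[ℂ] (ℕ × ℕ → ℂ) where
  toFun T := fun q => (T (Finsupp.single q.2 1)) q.1
  map_add' a b := by funext q; simp
  map_smul' c a := by funext q; simp

def G : (Unit ⊕ ℕ+ ⊕ ℕ+ ⊕ ℕ × ℕ) → ℕ × ℕ → ℂ :=
  ⇑(coordLM ∘ₗ ψ.toLinearMap) ∘ basisFam

lemma G_inl (u : Unit) (q : ℕ × ℕ) :
    G (Sum.inl u) q = if q.2 = q.1 then 1 else 0 := by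
  simp [G, coordLM, basisFam, Finsupp.single_apply]

lemma G_v (p : ℕ+) (q : ℕ × ℕ) :
    G (Sum.inr (Sum.inl p)) q = if q.2 + (p : ℕ) = q.1 then 1 else 0 := by
  simp [G, coordLM, basisFam, map_pow, ψ_v, Vpow, Finsupp.single_apply]

lemma G_u (p : ℕ+) (q : ℕ × ℕ) :
    G (Sum.inr (Sum.inr (Sum.inl p))) q = if q.2 = q.1 + (p : ℕ) then 1 else 0 := by
  simp only [G, Function.comp_apply, LinearMap.comp_apply, AlgHom.toLinearMap_apply,
    basisFam, map_pow, ψ_u, coordLM, LinearMap.coe_mk, AddHom.coe_mk]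
  obtain ⟨m, n⟩ := q
  rcases le_or_gt (p : ℕ) n with h | h
  · obtain ⟨k, rfl⟩ : ∃ k, n = k + (p : ℕ) := ⟨n - p, by omega⟩
    rw [Upow_le, Finsupp.single_apply, if_congr (by omega : (k = m) ↔ (k + (p:ℕ) = m + (p:ℕ))) rfl rfl]
  · rw [Upow_lt _ _ h, if_neg (by omega)]
    simp

lemma G_e (ij : ℕ × ℕ) (q : ℕ × ℕ) :
    G (Sum.inr (Sum.inr (Sum.inr ij))) q = if q.2 = ij.2 ∧ ij.1 = q.1 then 1 else 0 := by
  simp only [G, Function.comp_apply, LinearMap.comp_apply, AlgHom.toLinearMap_apply,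
    basisFam, Te, map_mul, map_sub, map_one, map_pow, ψ_u, ψ_v, coordLM,
    LinearMap.coe_mk, AddHom.coe_mk]
  rw [Eop ij.1 ij.2 q.2]
  by_cases h : q.2 = ij.2
  · simp [h, Finsupp.single_apply]
  · simp [h]

def wt : Unit ⊕ ℕ+ ⊕ ℕ+ ⊕ ℕ × ℕ → ℕ
  | Sum.inl _ => 0
  | Sum.inr (Sum.inl p) => p
  | Sum.inr (Sum.inr (Sum.inl p)) => p
  | Sum.inr (Sum.inr (Sum.inr ij)) => ij.2

lemma G_li : LinearIndependent ℂ G := by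
  rw [linearIndependent_iff]
  intro g hg
  have key : ∀ q : ℕ × ℕ, (∑ k ∈ g.support, g k * G k q) = 0 := by
    intro q
    have h := congrFun hg q
    simp only [Finsupp.linearCombination_apply, Finsupp.sum, Finset.sum_apply,
      Pi.smul_apply, smul_eq_mul, Pi.zero_apply] at h
    exact h
  have main : ∀ (k₀) (q : ℕ × ℕ), G k₀ q = 1 →
      (∀ k ∈ g.support, k ≠ k₀ → g k * G k q = 0) → g k₀ = 0 := by
    intro k₀ q h1 h0
    by_cases hk : k₀ ∈ g.support
    · have hs := key q
      rw [Finset.sum_eq_single k₀ h0 (fun h => absurd hk h)] at hs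
      rwa [h1, mul_one] at hs
    · exact Finsupp.notMem_support_iff.mp hk
  set N : ℕ := (g.support.sup wt) + 1 with hNdef
  have hN : ∀ k ∈ g.support, wt k < N := fun k hk =>
    Nat.lt_succ_of_le (Finset.le_sup hk)
  -- step A : the coefficient of 1 vanishes
  have hA : g (Sum.inl ()) = 0 := by
    apply main _ (N, N) (by rw [G_inl, if_pos rfl])
    intro k hk hne
    rcases k with u | p | p | ij
    · cases u; exact absurd rfl hne
    · have := p.pos
      rw [G_v, if_neg ?_, mul_zero]; omega
    · have := p.pos
      rw [G_u, if_neg ?_, mul_zero]; omega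
    · have hw := hN _ hk
      simp only [wt] at hw
      rw [G_e, if_neg ?_, mul_zero]
      rintro ⟨h1, h2⟩; omega
  -- step B : coefficients of v^p vanish
  have hB : ∀ p₀ : ℕ+, g (Sum.inr (Sum.inl p₀)) = 0 := by
    intro p₀
    apply main _ (N + (p₀ : ℕ), N) (by rw [G_v, if_pos rfl])
    intro k hk hne
    rcases k with u | p | p | ij
    · have := p₀.pos
      rw [G_inl, if_neg ?_, mul_zero]; omega
    · rw [G_v, if_neg ?_, mul_zero]
      intro h
      exact hne (by rw [show p = p₀ from PNat.coe_injective (by omega : (p:ℕ) = (p₀:ℕ))])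
    · have := p.pos
      rw [G_u, if_neg ?_, mul_zero]; omega
    · have hw := hN _ hk
      simp only [wt] at hw
      rw [G_e, if_neg ?_, mul_zero]
      rintro ⟨h1, h2⟩; omega
  -- step C : coefficients of u^p vanish
  have hC : ∀ p₀ : ℕ+, g (Sum.inr (Sum.inr (Sum.inl p₀))) = 0 := by
    intro p₀
    by_cases hk₀ : (Sum.inr (Sum.inr (Sum.inl p₀)) : Unit ⊕ ℕ+ ⊕ ℕ+ ⊕ ℕ × ℕ) ∈ g.support
    · have hp₀ : (p₀ : ℕ) < N := by simpa [wt] using hN _ hk₀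
      apply main _ (N - (p₀ : ℕ), N)
        (by rw [G_u, if_pos (show N = N - (p₀ : ℕ) + (p₀ : ℕ) by omega)])
      intro k hk hne
      rcases k with u | p | p | ij
      · have := p₀.pos
        rw [G_inl, if_neg ?_, mul_zero]; omega
      · have := p.pos
        rw [G_v, if_neg ?_, mul_zero]; omega
      · have := p.pos
        rw [G_u, if_neg ?_, mul_zero]
        intro h
        exact hne (by rw [show p = p₀ from PNat.coe_injective (by omega : (p:ℕ) = (p₀:ℕ))])
      · have hw := hN _ hk
        simp only [wt] at hw
        rw [G_e, if_neg ?_, mul_zero]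
        rintro ⟨h1, h2⟩; omega
    · exact Finsupp.notMem_support_iff.mp hk₀
  -- step D : coefficients of e_{ij} vanish
  have hD : ∀ ij : ℕ × ℕ, g (Sum.inr (Sum.inr (Sum.inr ij))) = 0 := by
    intro ij
    apply main _ (ij.1, ij.2) (by rw [G_e, if_pos ⟨rfl, rfl⟩])
    intro k hk hne
    rcases k with u | p | p | ij'
    · cases u; rw [hA, zero_mul]
    · rw [hB p, zero_mul]
    · rw [hC p, zero_mul]
    · rw [G_e, if_neg ?_, mul_zero]
      rintro ⟨h1, h2⟩
      exact hne (by rw [show ij' = ij from Prod.ext h2 h1.symm])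
  ext k
  rcases k with u | p | p | ij
  · cases u; exact hA
  · exact hB p
  · exact hC p
  · exact hD ij

lemma basisFam_li : LinearIndependent ℂ basisFam :=
  LinearIndependent.of_comp (coordLM ∘ₗ ψ.toLinearMap) G_li

lemma huv : Tu * Tv = 1 := by
  have h := RingQuot.mkAlgHom_rel ℂ ToeplitzRel.rel
  rw [map_mul, map_one] at h
  exact h

lemma Tv_mul_Tu_pow (m : ℕ) : Tv * Tu ^ (m + 1) = Tu ^ m - Te 0 m := by
  rw [Te, pow_zero, one_mul, sub_mul, one_mul, sub_sub_cancel, pow_succ', mul_assoc]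

lemma Tv_mul_Te (i j : ℕ) : Tv * Te i j = Te (i + 1) j := by
  simp only [Te, pow_succ', mul_assoc]

lemma Tu_mul_Tv_pow (m : ℕ) : Tu * Tv ^ (m + 1) = Tv ^ m := by
  rw [pow_succ', ← mul_assoc, huv, one_mul]

lemma Tu_mul_Te_zero (j : ℕ) : Tu * Te 0 j = 0 := by
  rw [Te, pow_zero, one_mul, ← mul_assoc, mul_sub, mul_one, ← mul_assoc, huv, one_mul,
    sub_self, zero_mul]

lemma Tu_mul_Te_succ (m j : ℕ) : Tu * Te (m + 1) j = Te m j := by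
  simp only [Te, pow_succ', mul_assoc]
  rw [← mul_assoc, huv, one_mul]

lemma span_top : Submodule.span ℂ (Set.range basisFam) = ⊤ := by
  have hmem : ∀ k, basisFam k ∈ Submodule.span ℂ (Set.range basisFam) :=
    fun k => Submodule.subset_span ⟨k, rfl⟩
  have h1 : (1 : Talg) ∈ Submodule.span ℂ (Set.range basisFam) := hmem (Sum.inl ())
  have hvpow : ∀ m : ℕ, Tv ^ m ∈ Submodule.span ℂ (Set.range basisFam) := by
    intro m
    cases m with
    | zero => simpa using h1
    | succ k => exact hmem (Sum.inr (Sum.inl ⟨k + 1, k.succ_pos⟩))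
  have hupow : ∀ m : ℕ, Tu ^ m ∈ Submodule.span ℂ (Set.range basisFam) := by
    intro m
    cases m with
    | zero => simpa using h1
    | succ k => exact hmem (Sum.inr (Sum.inr (Sum.inl ⟨k + 1, k.succ_pos⟩)))
  have hTe : ∀ i j : ℕ, Te i j ∈ Submodule.span ℂ (Set.range basisFam) :=
    fun i j => hmem (Sum.inr (Sum.inr (Sum.inr (i, j))))
  have hV : ∀ s ∈ Submodule.span ℂ (Set.range basisFam),
      Tv * s ∈ Submodule.span ℂ (Set.range basisFam) := by
    intro s hs
    induction hs using Submodule.span_induction with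
    | mem x hx =>
      obtain ⟨k, rfl⟩ := hx
      rcases k with u | p | p | ij
      · show Tv * (1 : Talg) ∈ _
        rw [mul_one]
        simpa using hvpow 1
      · show Tv * Tv ^ (p : ℕ) ∈ _
        rw [← pow_succ']
        exact hvpow _
      · obtain ⟨m, hm⟩ : ∃ m, (p : ℕ) = m + 1 := ⟨(p : ℕ) - 1, by have := p.pos; omega⟩
        show Tv * Tu ^ (p : ℕ) ∈ _
        rw [hm, Tv_mul_Tu_pow]
        exact sub_mem (hupow m) (hTe 0 m)
      · show Tv * Te ij.1 ij.2 ∈ _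
        rw [Tv_mul_Te]
        exact hTe _ _
    | zero => rw [mul_zero]; exact zero_mem _
    | add x y hx hy ihx ihy => rw [mul_add]; exact add_mem ihx ihy
    | smul c x hx ihx => rw [mul_smul_comm]; exact Submodule.smul_mem _ c ihx
  have hU : ∀ s ∈ Submodule.span ℂ (Set.range basisFam),
      Tu * s ∈ Submodule.span ℂ (Set.range basisFam) := by
    intro s hs
    induction hs using Submodule.span_induction with
    | mem x hx =>
      obtain ⟨k, rfl⟩ := hx
      rcases k with u | p | p | ij
      · show Tu * (1 : Talg) ∈ _
        rw [mul_one]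
        simpa using hupow 1
      · obtain ⟨m, hm⟩ : ∃ m, (p : ℕ) = m + 1 := ⟨(p : ℕ) - 1, by have := p.pos; omega⟩
        show Tu * Tv ^ (p : ℕ) ∈ _
        rw [hm, Tu_mul_Tv_pow]
        exact hvpow m
      · show Tu * Tu ^ (p : ℕ) ∈ _
        rw [← pow_succ']
        exact hupow _
      · show Tu * Te ij.1 ij.2 ∈ _
        cases hij : ij.1 with
        | zero => rw [Tu_mul_Te_zero]; exact zero_mem _
        | succ m => rw [Tu_mul_Te_succ]; exact hTe _ _
    | zero => rw [mul_zero]; exact zero_mem _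
    | add x y hx hy ihx ihy => rw [mul_add]; exact add_mem ihx ihy
    | smul c x hx ihx => rw [mul_smul_comm]; exact Submodule.smul_mem _ c ihx
  have main : ∀ y : FreeAlgebra ℂ Bool, ∀ s ∈ Submodule.span ℂ (Set.range basisFam),
      RingQuot.mkAlgHom ℂ ToeplitzRel y * s ∈ Submodule.span ℂ (Set.range basisFam) := by
    intro y
    induction y using FreeAlgebra.induction with
    | grade0 r =>
      intro s hs
      rw [AlgHom.commutes, ← Algebra.smul_def]
      exact Submodule.smul_mem _ r hs
    | grade1 b =>
      cases b with
      | false => exact hU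
      | true => exact hV
    | mul a b ha hb =>
      intro s hs
      rw [map_mul, mul_assoc]
      exact ha _ (hb s hs)
    | add a b ha hb =>
      intro s hs
      rw [map_add, add_mul]
      exact add_mem (ha s hs) (hb s hs)
  rw [eq_top_iff]
  rintro x -
  obtain ⟨y, rfl⟩ := RingQuot.mkAlgHom_surjective ℂ ToeplitzRel x
  simpa using main y 1 h1

end ToeplitzAux


/-- The family `1`, `v^p (p ≥ 1)`, `u^p (p ≥ 1)`, `e_{i,j} (i,j ∈ ℕ)` is a
`ℂ`-vector space basis of the algebraic Toeplitz algebra. -/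
theorem stmt5 :
    LinearIndependent ℂ basisFam ∧ Submodule.span ℂ (Set.range basisFam) = ⊤ := by
  exact ⟨basisFam_li, span_top⟩
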